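/- There is no sequence in $[0,1]^d$ that is $\gamma$-uniformly distributed for any $\gamma > 1/2$. -/

import Mathlib

open Finset

/-- Euclidean norm of an integer vector `k ∈ ℤ^d`. -/
noncomputable def intNorm {d : ℕ} (k : Fin d → ℤ) : ℝ :=
  Real.sqrt (∑ i, ((k i : ℝ)) ^ 2)

/-- A sequence `{v_n}` in `[0,1]^d` is `γ`-uniformly distributed if for every `ε > 0`
there is `C_ε > 0` with `|N⁻¹ ∑_{n=1}^N e^{2πi k·v_n}| ≤ C_ε |k|^ε N^{-γ}` for every
nonzero `k ∈ ℤ^d` and every `N ≥ 1`. -/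
def IsGammaUD {d : ℕ} (γ : ℝ) (v : ℕ → Fin d → ℝ) : Prop :=
  ∀ ε : ℝ, 0 < ε → ∃ C : ℝ, 0 < C ∧ ∀ k : Fin d → ℤ, k ≠ 0 → ∀ N : ℕ, 1 ≤ N →
    ‖(N : ℂ)⁻¹ * ∑ n ∈ Finset.range N,
        Complex.exp (2 * Real.pi * Complex.I * (∑ i, (k i : ℝ) * v n i))‖
      ≤ C * intNorm k ^ ε * (N : ℝ) ^ (-γ)

open Complex in
private lemma key {κ : Type*} [Fintype κ] (N : ℕ) (f : ℕ → κ → ℂ) (hf : ∀ n j, ‖f n j‖ = 1) :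
    (N : ℝ) * (Fintype.card κ : ℝ)^2 ≤ ∑ j : κ, ∑ j' : κ,
      Complex.normSq (∑ n ∈ Finset.range N, f n j * (starRingEnd ℂ) (f n j')) := by
  classical
  set G : ℕ → ℕ → ℂ := fun n m => ∑ j : κ, f n j * (starRingEnd ℂ) (f m j) with hG
  have hswap : (∑ j : κ, ∑ j' : κ,
      Complex.normSq (∑ n ∈ Finset.range N, f n j * (starRingEnd ℂ) (f n j')))
      = ∑ n ∈ Finset.range N, ∑ m ∈ Finset.range N, Complex.normSq (G n m) := by
    have : ((∑ j : κ, ∑ j' : κ,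
        Complex.normSq (∑ n ∈ Finset.range N, f n j * (starRingEnd ℂ) (f n j')) : ℝ) : ℂ)
        = ((∑ n ∈ Finset.range N, ∑ m ∈ Finset.range N, Complex.normSq (G n m) : ℝ) : ℂ) := by
      push_cast [← Complex.mul_conj]
      simp only [map_sum, map_mul, Complex.conj_conj, Finset.sum_mul_sum, hG]
      rw [Finset.sum_comm]
      calc (∑ y : κ, ∑ x : κ, ∑ n ∈ range N, ∑ m ∈ range N,
              f n x * (starRingEnd ℂ) (f n y) * ((starRingEnd ℂ) (f m x) * f m y))
          = ∑ y : κ, ∑ n ∈ range N, ∑ x : κ, ∑ m ∈ range N,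
              f n x * (starRingEnd ℂ) (f n y) * ((starRingEnd ℂ) (f m x) * f m y) :=
            Finset.sum_congr rfl fun y _ => Finset.sum_comm
        _ = ∑ y : κ, ∑ n ∈ range N, ∑ m ∈ range N, ∑ x : κ,
              f n x * (starRingEnd ℂ) (f n y) * ((starRingEnd ℂ) (f m x) * f m y) :=
            Finset.sum_congr rfl fun y _ => Finset.sum_congr rfl fun n _ => Finset.sum_comm
        _ = ∑ n ∈ range N, ∑ y : κ, ∑ m ∈ range N, ∑ x : κ,
              f n x * (starRingEnd ℂ) (f n y) * ((starRingEnd ℂ) (f m x) * f m y) :=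
            Finset.sum_comm
        _ = ∑ n ∈ range N, ∑ m ∈ range N, ∑ y : κ, ∑ x : κ,
              f n x * (starRingEnd ℂ) (f n y) * ((starRingEnd ℂ) (f m x) * f m y) :=
            Finset.sum_congr rfl fun n _ => Finset.sum_comm
        _ = ∑ n ∈ range N, ∑ m ∈ range N, ∑ x : κ, ∑ y : κ,
              f n x * (starRingEnd ℂ) (f n y) * ((starRingEnd ℂ) (f m x) * f m y) :=
            Finset.sum_congr rfl fun n _ => Finset.sum_congr rfl fun m _ => Finset.sum_comm
        _ = ∑ n ∈ range N, ∑ m ∈ range N, ∑ x : κ, ∑ y : κ,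
              f n x * (starRingEnd ℂ) (f m x) * ((starRingEnd ℂ) (f n y) * f m y) := by
            refine Finset.sum_congr rfl fun n _ => Finset.sum_congr rfl fun m _ =>
              Finset.sum_congr rfl fun x _ => Finset.sum_congr rfl fun y _ => by ring
    exact_mod_cast this
  rw [hswap]
  have hone : ∀ n j, f n j * (starRingEnd ℂ) (f n j) = 1 := by
    intro n j
    rw [Complex.mul_conj]
    norm_cast
    rw [Complex.normSq_eq_norm_sq, hf n j]; norm_num
  have hdiag : ∀ n, Complex.normSq (G n n) = ((Fintype.card κ : ℝ))^2 := by
    intro n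
    have h1 : G n n = ((Fintype.card κ : ℝ) : ℂ) := by
      show (∑ j : κ, f n j * (starRingEnd ℂ) (f n j)) = _
      rw [Finset.sum_congr rfl fun j _ => hone n j]
      simp
    rw [h1, Complex.normSq_ofReal, sq]
  calc (N : ℝ) * (Fintype.card κ : ℝ)^2
      = ∑ n ∈ Finset.range N, ((Fintype.card κ : ℝ))^2 := by simp [mul_comm]
    _ ≤ ∑ n ∈ Finset.range N, ∑ m ∈ Finset.range N, Complex.normSq (G n m) := by
        refine Finset.sum_le_sum fun n hn => ?_
        rw [← hdiag n]
        exact Finset.single_le_sum (fun m _ => Complex.normSq_nonneg _) hn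

set_option maxHeartbeats 2000000 in
/-- No sequence in `[0,1]^d` is `γ`-uniformly distributed for `γ > 1/2`. -/
theorem stmt4 (d : ℕ) (hd : 0 < d) (γ : ℝ) (hγ : 1/2 < γ)
    (v : ℕ → Fin d → ℝ) (hv : ∀ n, v n ∈ Set.Icc (0 : Fin d → ℝ) 1) :
    ¬ IsGammaUD γ v := by
  intro h
  set ε : ℝ := (2*γ - 1)/8 with hεdef
  have hε : 0 < ε := by rw [hεdef]; linarith
  obtain ⟨C, hC, hB⟩ := h ε hε
  set β : ℝ := (2*γ - 1)/2 with hβdef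
  have hβ : 0 < β := by rw [hβdef]; linarith
  set D : ℝ := (2 * Real.sqrt d) ^ ε with hDdef
  have hD : 0 < D := by
    apply Real.rpow_pos_of_pos
    have : (0:ℝ) < Real.sqrt d := Real.sqrt_pos.2 (by exact_mod_cast hd)
    linarith
  obtain ⟨N, hNgt⟩ := exists_nat_gt (max 1 ((2*C^2*D^2 + 1) ^ (1/β)))
  set x : ℝ := (N : ℝ) with hxdef
  have hx : 1 < x := lt_of_le_of_lt (le_max_left _ _) hNgt
  have hx0 : 0 < x := by linarith
  have hN1 : 1 ≤ N := by rw [hxdef] at hx; exact_mod_cast hx.le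
  -- the chosen N beats the constant
  have hNβ : 2*C^2*D^2 < x ^ β := by
    have h0 : (0:ℝ) < 2*C^2*D^2 + 1 := by positivity
    have h1 : (2*C^2*D^2 + 1) ^ (1/β) < x := lt_of_le_of_lt (le_max_right _ _) hNgt
    have h2 : ((2*C^2*D^2 + 1) ^ (1/β)) ^ β < x ^ β :=
      Real.rpow_lt_rpow (Real.rpow_nonneg h0.le _) h1 hβ
    rw [← Real.rpow_mul h0.le, one_div, inv_mul_cancel₀ hβ.ne', Real.rpow_one] at h2
    linarith
  -- set up K and the cube of frequencies
  set K : ℕ := 2*N^2 with hKdef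
  have hKx : (K:ℝ) = 2*x^2 := by rw [hKdef, hxdef]; push_cast; ring
  have hK0 : (0:ℝ) < (K:ℝ) := by rw [hKx]; positivity
  -- the phase functions
  set f : ℕ → (Fin d → Fin K) → ℂ :=
    fun n j => Complex.exp (2 * Real.pi * Complex.I * (∑ i, ((j i : ℕ) : ℝ) * v n i)) with hfdef
  have hf : ∀ n j, ‖f n j‖ = 1 := by
    intro n j
    show ‖Complex.exp (2 * (Real.pi:ℂ) * Complex.I *
        ((∑ i, ((j i : ℕ) : ℝ) * v n i : ℝ) : ℂ))‖ = 1
    have e : (2 * (Real.pi:ℂ) * Complex.I * ((∑ i, ((j i : ℕ) : ℝ) * v n i : ℝ) : ℂ))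
        = (((2 * Real.pi * ∑ i, ((j i : ℕ) : ℝ) * v n i : ℝ)) : ℂ) * Complex.I := by
      push_cast; ring
    rw [e, Complex.norm_exp_ofReal_mul_I]
  have hone : ∀ n j, f n j * (starRingEnd ℂ) (f n j) = 1 := by
    intro n j
    rw [Complex.mul_conj]
    norm_cast
    rw [Complex.normSq_eq_norm_sq, hf n j]; norm_num
  -- product of phases is the phase of the difference frequency
  have hprod : ∀ n (j j' : Fin d → Fin K),
      f n j * (starRingEnd ℂ) (f n j')
      = Complex.exp (2 * Real.pi * Complex.I *
          ((∑ i, ((((j i : ℕ) : ℤ) - ((j' i : ℕ) : ℤ) : ℤ) : ℝ) * v n i : ℝ) : ℂ)) := by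
    intro n j j'
    have hXY : (∑ i, ((((j i : ℕ) : ℤ) - ((j' i : ℕ) : ℤ) : ℤ) : ℝ) * v n i)
        = (∑ i, ((j i : ℕ) : ℝ) * v n i) - ∑ i, ((j' i : ℕ) : ℝ) * v n i := by
      rw [← Finset.sum_sub_distrib]
      refine Finset.sum_congr rfl fun i _ => ?_
      push_cast; ring
    show Complex.exp (2 * (Real.pi:ℂ) * Complex.I *
          ((∑ i, ((j i : ℕ) : ℝ) * v n i : ℝ) : ℂ)) *
        (starRingEnd ℂ) (Complex.exp (2 * (Real.pi:ℂ) * Complex.I *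
          ((∑ i, ((j' i : ℕ) : ℝ) * v n i : ℝ) : ℂ))) = _
    rw [← Complex.exp_conj, ← Complex.exp_add]
    congr 1
    rw [hXY]
    simp only [map_mul, Complex.conj_I, Complex.conj_ofReal, map_ofNat]
    push_cast
    ring
  -- lower bound from the key lemma
  set Q : ℝ := ((K:ℝ))^d with hQdef
  have hQpos : 0 < Q := by rw [hQdef]; positivity
  have hcard : ((Fintype.card (Fin d → Fin K) : ℕ) : ℝ) = Q := by
    rw [Fintype.card_fun, Fintype.card_fin, Fintype.card_fin, hQdef]; push_cast; ring
  have hkey := key N f hf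
  rw [hcard] at hkey
  -- upper bound for each term
  set B : ℝ := x * (C * (((K:ℝ)) * Real.sqrt d) ^ ε * x ^ (-γ)) with hBdef
  have hB0 : 0 ≤ B := by
    rw [hBdef]
    have := Real.rpow_nonneg (by positivity : (0:ℝ) ≤ (K:ℝ) * Real.sqrt d) ε
    have := Real.rpow_nonneg hx0.le (-γ)
    positivity
  have hterm : ∀ j j' : Fin d → Fin K,
      Complex.normSq (∑ n ∈ Finset.range N, f n j * (starRingEnd ℂ) (f n j'))
        ≤ B^2 + if j = j' then x^2 else 0 := by
    intro j j'
    by_cases hjj : j = j'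
    · subst hjj
      rw [if_pos rfl]
      have hsum1 : (∑ n ∈ Finset.range N, f n j * (starRingEnd ℂ) (f n j)) = (N : ℂ) := by
        rw [Finset.sum_congr rfl fun n _ => hone n j]
        simp
      rw [hsum1]
      have : Complex.normSq ((N:ℂ)) = x^2 := by
        rw [show ((N:ℂ)) = ((x : ℝ) : ℂ) by rw [hxdef]; push_cast; ring,
          Complex.normSq_ofReal, sq]
      rw [this]
      nlinarith [sq_nonneg B]
    · rw [if_neg hjj, add_zero]
      set k : Fin d → ℤ := fun i => ((j i : ℕ) : ℤ) - ((j' i : ℕ) : ℤ) with hkdef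
      have hk : k ≠ 0 := by
        intro hk0
        apply hjj
        funext i
        have h1 : ((j i : ℕ) : ℤ) - ((j' i : ℕ) : ℤ) = 0 := congrFun hk0 i
        have h2 : (j i : ℕ) = (j' i : ℕ) := by omega
        exact Fin.ext h2
      have hrw : (∑ n ∈ Finset.range N, f n j * (starRingEnd ℂ) (f n j'))
          = ∑ n ∈ Finset.range N, Complex.exp (2 * Real.pi * Complex.I *
              ((∑ i, ((k i : ℤ) : ℝ) * v n i : ℝ) : ℂ)) :=
        Finset.sum_congr rfl fun n _ => hprod n j j'
      have hb := hB k hk N hN1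
      rw [norm_mul, norm_inv, Complex.norm_natCast] at hb
      -- bound intNorm k
      have hkb : intNorm k ≤ (K:ℝ) * Real.sqrt d := by
        have h1 : intNorm k ≤ Real.sqrt (∑ _i : Fin d, ((K:ℝ))^2) := by
          apply Real.sqrt_le_sqrt
          refine Finset.sum_le_sum fun i _ => ?_
          have ha : ((j i : ℕ) : ℝ) < (K:ℝ) := by exact_mod_cast (j i).isLt
          have hb' : ((j' i : ℕ) : ℝ) < (K:ℝ) := by exact_mod_cast (j' i).isLt
          have ha0 : (0:ℝ) ≤ ((j i : ℕ) : ℝ) := by positivity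
          have hb0 : (0:ℝ) ≤ ((j' i : ℕ) : ℝ) := by positivity
          have : ((k i : ℤ) : ℝ) = ((j i : ℕ) : ℝ) - ((j' i : ℕ) : ℝ) := by
            rw [hkdef]; push_cast; ring
          rw [this]
          nlinarith
        have h2 : Real.sqrt (∑ _i : Fin d, ((K:ℝ))^2) = (K:ℝ) * Real.sqrt d := by
          rw [Finset.sum_const, Finset.card_univ, Fintype.card_fin, nsmul_eq_mul,
            mul_comm ((d:ℝ)) _, Real.sqrt_mul (by positivity), Real.sqrt_sq hK0.le]
        rw [h2] at h1; exact h1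
      have hkε : intNorm k ^ ε ≤ ((K:ℝ) * Real.sqrt d) ^ ε :=
        Real.rpow_le_rpow (Real.sqrt_nonneg _) hkb hε.le
      have hSB : ‖∑ n ∈ Finset.range N, Complex.exp (2 * Real.pi * Complex.I *
              ((∑ i, ((k i : ℤ) : ℝ) * v n i : ℝ) : ℂ))‖ ≤ B := by
        have hx' : (0:ℝ) < x := hx0
        have h3 : x⁻¹ * ‖∑ n ∈ Finset.range N, Complex.exp (2 * Real.pi * Complex.I *
              ((∑ i, ((k i : ℤ) : ℝ) * v n i : ℝ) : ℂ))‖ ≤ C * intNorm k ^ ε * x ^ (-γ) := hb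
        rw [hBdef]
        calc ‖∑ n ∈ Finset.range N, Complex.exp (2 * Real.pi * Complex.I *
              ((∑ i, ((k i : ℤ) : ℝ) * v n i : ℝ) : ℂ))‖
            = x * (x⁻¹ * ‖∑ n ∈ Finset.range N, Complex.exp (2 * Real.pi * Complex.I *
              ((∑ i, ((k i : ℤ) : ℝ) * v n i : ℝ) : ℂ))‖) := by
              rw [← mul_assoc, mul_inv_cancel₀ hx0.ne', one_mul]
          _ ≤ x * (C * intNorm k ^ ε * x ^ (-γ)) := by
              apply mul_le_mul_of_nonneg_left h3 hx0.le
          _ ≤ x * (C * (((K:ℝ)) * Real.sqrt d) ^ ε * x ^ (-γ)) := by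
              have hxg : (0:ℝ) ≤ x ^ (-γ) := Real.rpow_nonneg hx0.le _
              apply mul_le_mul_of_nonneg_left _ hx0.le
              apply mul_le_mul_of_nonneg_right _ hxg
              exact mul_le_mul_of_nonneg_left hkε hC.le
      rw [hrw]
      rw [Complex.normSq_eq_norm_sq]
      exact pow_le_pow_left₀ (norm_nonneg _) hSB 2
  -- sum the upper bounds
  have hub : (∑ j : Fin d → Fin K, ∑ j' : Fin d → Fin K,
      Complex.normSq (∑ n ∈ Finset.range N, f n j * (starRingEnd ℂ) (f n j')))
      ≤ Q^2 * B^2 + Q * x^2 := by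
    calc (∑ j : Fin d → Fin K, ∑ j' : Fin d → Fin K,
        Complex.normSq (∑ n ∈ Finset.range N, f n j * (starRingEnd ℂ) (f n j')))
        ≤ ∑ j : Fin d → Fin K, ∑ j' : Fin d → Fin K,
            (B^2 + if j = j' then x^2 else 0) :=
          Finset.sum_le_sum fun j _ => Finset.sum_le_sum fun j' _ => hterm j j'
      _ = Q^2 * B^2 + Q * x^2 := by
          simp only [Finset.sum_add_distrib, Finset.sum_const, Finset.card_univ,
            nsmul_eq_mul, Finset.sum_ite_eq, Finset.mem_univ, if_pos]
          rw [hcard]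
          ring
  have hmain : x * Q^2 ≤ Q^2 * B^2 + Q * x^2 := le_trans hkey hub
  -- K^d ≥ K = 2 x^2
  have hQ2 : 2 * x^2 ≤ Q := by
    have h1 : K ≤ K^d := Nat.le_self_pow hd.ne' K
    have h2 : ((K:ℝ)) ≤ ((K:ℝ))^d := by exact_mod_cast h1
    rw [hQdef, hKx]; rw [hKx] at h2; exact h2
  -- deduce x ≤ 2 B^2
  clear hterm hub hkey hprod hone hf hB h hfdef
  clear f
  clear hcard hNgt hv hN1 hK0
  clear_value ε β D x K Q B
  have hx2B : x ≤ 2 * B^2 := by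
    have e1 : Q * x^2 ≤ Q^2/2 := by
      calc Q * x^2 ≤ Q * (Q/2) :=
            mul_le_mul_of_nonneg_left (by linarith) hQpos.le
        _ = Q^2/2 := by ring
    have e2 : Q^2/2 ≤ Q^2 * x / 2 := by
      have h5 : Q^2/2 * 1 ≤ Q^2/2 * x :=
        mul_le_mul_of_nonneg_left hx.le (by positivity)
      linarith
    have e3 : Q^2 * (x/2) ≤ Q^2 * B^2 := by linarith
    have e4 := le_of_mul_le_mul_left e3 (by positivity : (0:ℝ) < Q^2)
    linarith
  -- compute B
  have hBval : B = C * D * x ^ (1 + 2*ε - γ) := by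
    rw [hBdef, hKx, hDdef]
    rw [show (2*x^2*Real.sqrt d) = (2*Real.sqrt d)*(x^2) by ring,
      Real.mul_rpow (by positivity) (by positivity)]
    have h2 : ((x^2:ℝ)) ^ ε = x ^ (2*ε) := by
      rw [← Real.rpow_natCast x 2, ← Real.rpow_mul hx0.le]; norm_num
    rw [h2, show (1+2*ε-γ) = 1 + (2*ε + -γ) by ring, Real.rpow_add hx0,
      Real.rpow_add hx0, Real.rpow_one]
    ring
  have hB2 : 2 * B^2 = 2*C^2*D^2 * x ^ (1 - β) := by
    rw [hBval]
    have h1 : (x ^ (1 + 2*ε - γ))^2 = x ^ (1 - β) := by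
      rw [sq, ← Real.rpow_add hx0]
      congr 1
      rw [hεdef, hβdef]; ring
    rw [mul_pow, mul_pow, h1]; ring
  -- final contradiction
  have hfin : x ^ β ≤ 2*C^2*D^2 := by
    have hpos1 : (0:ℝ) < x ^ (1-β) := Real.rpow_pos_of_pos hx0 _
    have h1 : x ^ β * x ^ (1-β) = x := by
      rw [← Real.rpow_add hx0]; norm_num
    have h2 : x ^ β * x ^ (1-β) ≤ (2*C^2*D^2) * x ^ (1-β) := by
      rw [h1]; rw [hB2] at hx2B; linarith
    exact le_of_mul_le_mul_right h2 hpos1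
  linarith
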